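/- Let y₁, y₂ be words over Σ, # ∉ Σ, y₃ = y₁#y₂, and let x = aub with a,b ∈ Σ be such that x ∈ MAW^ℓ(y₃) but x ∉ MAW^ℓ(y₁) ∪ MAW^ℓ(y₂). Then either (au occurs in y₁ but not in y₂ and ub occurs in y₂ but not in y₁) or (au occurs in y₂ but not in y₁ and ub occurs in y₁ but not in y₂). -/

import Mathlib

/-- `x` is a minimal absent word (MAW) of `y`: `x` is not a factor of `y`,
but every proper factor of `x` is a factor of `y`. -/
def MAW {α : Type*} (y x : List α) : Prop :=
  ¬ x <:+: y ∧ ∀ f : List α, f <:+: x → f ≠ x → f <:+: y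

/-- MAW of length at most `ℓ`. -/
def MAWle {α : Type*} (ℓ : ℕ) (y x : List α) : Prop :=
  MAW y x ∧ x.length ≤ ℓ

/-- Reduced set: MAWs of `u` (length ≤ ℓ) containing no MAW of `v` (length ≤ ℓ) as a factor. -/
def RMAW {α : Type*} (ℓ : ℕ) (u v x : List α) : Prop :=
  MAWle ℓ u x ∧ ∀ w : List α, MAWle ℓ v w → ¬ w <:+: x

lemma prefix_split_aux {α : Type*} {c : α} {f l₂ : List α}
    (hc : c ∉ f) : ∀ l₁ : List α, f <+: l₁ ++ c :: l₂ → f <+: l₁ := by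
  induction f with
  | nil => intro l₁ _; exact List.nil_prefix
  | cons x f' ih =>
    intro l₁ h
    cases l₁ with
    | nil =>
      simp only [List.nil_append, List.cons_prefix_cons] at h
      exact absurd (h.1 ▸ List.mem_cons_self (a := x) (l := f')) hc
    | cons d l₁' =>
      simp only [List.cons_append, List.cons_prefix_cons] at h
      have hc' : c ∉ f' := fun hm => hc (List.mem_cons_of_mem _ hm)
      exact List.cons_prefix_cons.mpr ⟨h.1, ih hc' l₁' h.2⟩

lemma infix_split_aux {α : Type*} {c : α} {f l₂ : List α}
    (hc : c ∉ f) : ∀ l₁ : List α, f <:+: l₁ ++ c :: l₂ → f <:+: l₁ ∨ f <:+: l₂ := by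
  intro l₁
  induction l₁ with
  | nil =>
    intro h
    obtain ⟨s, t, hst⟩ := h
    cases s with
    | nil =>
      have hp : f <+: ([] : List α) ++ c :: l₂ := ⟨t, by simpa using hst⟩
      have := prefix_split_aux hc [] hp
      rw [List.prefix_nil] at this
      subst this
      exact Or.inr List.nil_infix
    | cons e s' =>
      simp only [List.cons_append, List.nil_append, List.cons.injEq] at hst
      exact Or.inr ⟨s', t, hst.2⟩
  | cons d l₁' ih =>
    intro h
    obtain ⟨s, t, hst⟩ := h
    cases s with
    | nil =>
      have hp : f <+: (d :: l₁') ++ c :: l₂ := ⟨t, by simpa using hst⟩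
      exact Or.inl (prefix_split_aux hc _ hp).isInfix
    | cons e s' =>
      simp only [List.cons_append, List.cons.injEq] at hst
      rcases ih ⟨s', t, hst.2⟩ with h' | h'
      · exact Or.inl (h'.trans (List.infix_cons (List.infix_refl _)))
      · exact Or.inr h'

lemma infix_proper_aux {α : Type*} {f l : List α} (h : f <:+: l)
    (hlen : f.length < l.length) : f <:+: l.dropLast ∨ f <:+: l.tail := by
  obtain ⟨s, t, hst⟩ := h
  cases t with
  | nil =>
    cases s with
    | nil =>
      simp only [List.nil_append, List.append_nil] at hst
      exact absurd hlen (by rw [hst]; exact lt_irrefl _)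
    | cons e s' =>
      right
      rw [← hst]
      simp only [List.append_nil, List.cons_append, List.tail_cons]
      exact ⟨s', [], by simp⟩
  | cons w t' =>
    left
    rw [← hst, List.append_assoc, List.dropLast_append_of_ne_nil (by simp)]
    rw [List.dropLast_append_of_ne_nil (by simp)]
    exact ⟨s, (w :: t').dropLast, by rw [List.append_assoc]⟩

theorem case2_factors {α : Type*} (S : Set α) (hash : α)
    (hhash : hash ∉ S) (y₁ y₂ : List α)
    (hy₁ : ∀ a ∈ y₁, a ∈ S) (hy₂ : ∀ a ∈ y₂, a ∈ S)
    (ℓ : ℕ) (a b : α) (ha : a ∈ S) (hb : b ∈ S)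
    (u : List α) (hu : ∀ c ∈ u, c ∈ S)
    (hx : MAWle ℓ (y₁ ++ hash :: y₂) (a :: u ++ [b]))
    (h₁ : ¬ MAWle ℓ y₁ (a :: u ++ [b]))
    (h₂ : ¬ MAWle ℓ y₂ (a :: u ++ [b])) :
    ((a :: u) <:+: y₁ ∧ ¬ (a :: u) <:+: y₂ ∧
      (u ++ [b]) <:+: y₂ ∧ ¬ (u ++ [b]) <:+: y₁) ∨
    ((a :: u) <:+: y₂ ∧ ¬ (a :: u) <:+: y₁ ∧
      (u ++ [b]) <:+: y₁ ∧ ¬ (u ++ [b]) <:+: y₂) := by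
  set x : List α := a :: u ++ [b] with hxdef
  have hxS : ∀ c ∈ x, c ∈ S := by
    intro c hc
    simp only [hxdef, List.cons_append, List.mem_cons, List.mem_append,
      List.mem_singleton, List.not_mem_nil, or_false] at hc
    rcases hc with rfl | hc | rfl
    · exact ha
    · exact hu c hc
    · exact hb
  have hhx : hash ∉ x := fun hm => hhash (hxS hash hm)
  have hau_ne : (a :: u) ≠ x := by
    intro he
    have := congrArg List.length he
    simp [hxdef] at this
  have hub_ne : (u ++ [b]) ≠ x := by
    intro he
    have := congrArg List.length he
    simp [hxdef] at this
  have hau_inf : (a :: u) <:+: x := ⟨[], [b], by simp [hxdef]⟩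
  have hub_inf : (u ++ [b]) <:+: x := ⟨[a], [], by simp [hxdef]⟩
  have hau_y3 := hx.1.2 (a :: u) hau_inf hau_ne
  have hub_y3 := hx.1.2 (u ++ [b]) hub_inf hub_ne
  have hhau : hash ∉ (a :: u) := fun hm => hhx (hau_inf.mem hm)
  have hhub : hash ∉ (u ++ [b]) := fun hm => hhx (hub_inf.mem hm)
  have hau12 := infix_split_aux hhau y₁ hau_y3
  have hub12 := infix_split_aux hhub y₁ hub_y3
  -- x not infix of y₁ or y₂
  have hxy1 : ¬ x <:+: y₁ := fun h => hx.1.1 (h.trans (List.prefix_append _ _).isInfix)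
  have hxy2 : ¬ x <:+: y₂ := by
    intro h
    exact hx.1.1 (h.trans ((List.suffix_cons hash y₂).trans (List.suffix_append _ _)).isInfix)
  have hdrop : x.dropLast = a :: u := by
    show ((a :: u) ++ [b]).dropLast = a :: u
    rw [List.dropLast_concat]
  have htail : x.tail = u ++ [b] := by simp [hxdef]
  have key : ∀ y : List α, ¬ x <:+: y → ¬ MAWle ℓ y x →
      ¬ (a :: u) <:+: y ∨ ¬ (u ++ [b]) <:+: y := by
    intro y hny hnm
    have : ¬ ∀ f : List α, f <:+: x → f ≠ x → f <:+: y :=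
      fun h => hnm ⟨⟨hny, h⟩, hx.2⟩
    push_neg at this
    obtain ⟨f, hfx, hfne, hfy⟩ := this
    have hflt : f.length < x.length :=
      lt_of_le_of_ne hfx.length_le (fun he => hfne (hfx.sublist.eq_of_length he))
    rcases infix_proper_aux hfx hflt with h' | h'
    · rw [hdrop] at h'
      exact Or.inl fun hc => hfy (h'.trans hc)
    · rw [htail] at h'
      exact Or.inr fun hc => hfy (h'.trans hc)
  have k1 := key y₁ hxy1 h₁
  have k2 := key y₂ hxy2 h₂
  tauto
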